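/- Let ⟨O, ω, ι, O², O⁰⟩ be a ⊗-bimonad on the right-monoidal category ⟨𝓔, ⊗, R, α, ℓ⁻¹, r⟩. Then the data M⊙N := M⊗ON, γ̇_{L,M,N} := α_{L,OM,ON}∘(L⊗(OM⊗ω_N))∘(L⊗O^{M,ON}), η̇_M := ℓ⁻¹_{OM}∘ι_M, ε̇_M := r_M∘(M⊗O⁰) define a right-monoidal structure ⟨𝓔, ⊙, R, γ̇, η̇, ε̇⟩ on 𝓔. Moreover, ℓ⁻¹_{ON} : ON → R⊗ON = ṪN defines a monad morphism from O to the canonical monad Ṫ = R⊙− of the ⊙-structure, i.e., μ̇_N∘ℓ⁻¹_{OṪN}∘Oℓ⁻¹_{ON} = ℓ⁻¹_{ON}∘ω_N and η̇_N = ℓ⁻¹_{ON}∘ι_N. -/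

import Mathlib

open CategoryTheory

universe v u

/-- A right-monoidal (skew-monoidal) category structure on a category `C`
with unit object `R`: a product `⋆`, a skew-associator `γ`, a unit `η` and
a counit `ε`, none of which is assumed invertible, subject to the pentagon
and the four (co)unit axioms. -/
structure RightMonoidalStruct (C : Type u) [Category.{v} C] (R : C) where
  smp : C → C → C
  smpHom : ∀ {X X' Y Y' : C}, (X ⟶ X') → (Y ⟶ Y') → (smp X Y ⟶ smp X' Y')
  smpHom_id : ∀ (X Y : C), smpHom (𝟙 X) (𝟙 Y) = 𝟙 (smp X Y)
  smpHom_comp : ∀ {X X' X'' Y Y' Y'' : C} (f : X ⟶ X') (f' : X' ⟶ X'')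
      (g : Y ⟶ Y') (g' : Y' ⟶ Y''),
      smpHom (f ≫ f') (g ≫ g') = smpHom f g ≫ smpHom f' g'
  γ : ∀ (L M N : C), smp L (smp M N) ⟶ smp (smp L M) N
  η : ∀ (M : C), M ⟶ smp R M
  ε : ∀ (M : C), smp M R ⟶ M
  γ_natural : ∀ {L L' M M' N N' : C} (f : L ⟶ L') (g : M ⟶ M') (h : N ⟶ N'),
      smpHom f (smpHom g h) ≫ γ L' M' N' = γ L M N ≫ smpHom (smpHom f g) h
  η_natural : ∀ {M M' : C} (f : M ⟶ M'), f ≫ η M' = η M ≫ smpHom (𝟙 R) f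
  ε_natural : ∀ {M M' : C} (f : M ⟶ M'), smpHom f (𝟙 R) ≫ ε M' = ε M ≫ f
  pentagon : ∀ (K L M N : C),
      smpHom (𝟙 K) (γ L M N) ≫ γ K (smp L M) N ≫ smpHom (γ K L M) (𝟙 N)
        = γ K L (smp M N) ≫ γ (smp K L) M N
  unit_triangle : ∀ (M N : C), η (smp M N) ≫ γ R M N = smpHom (η M) (𝟙 N)
  counit_triangle : ∀ (M N : C), γ M N R ≫ ε (smp M N) = smpHom (𝟙 M) (ε N)
  mixed_triangle : ∀ (M N : C),
      smpHom (𝟙 M) (η N) ≫ γ M R N ≫ smpHom (ε M) (𝟙 N) = 𝟙 (smp M N)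
  unit_counit : η R ≫ ε R = 𝟙 R


variable {C : Type u} [Category.{v} C] {R : C}

/-- The multiplication `μ_M := (ε_R ⋆ M) ∘ γ_{R,R,M}` of the canonical monad `T = R ⋆ -`. -/
def RightMonoidalStruct.μ (S : RightMonoidalStruct C R) (M : C) :
    S.smp R (S.smp R M) ⟶ S.smp R M :=
  S.γ R R M ≫ S.smpHom (S.ε R) (𝟙 M)

/-- The comultiplication `δ_M := γ_{M,R,R} ∘ (M ⋆ η_R)` of the canonical comonad `Q = - ⋆ R`. -/
def RightMonoidalStruct.δ (S : RightMonoidalStruct C R) (M : C) :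
    S.smp M R ⟶ S.smp (S.smp M R) R :=
  S.smpHom (𝟙 M) (S.η R) ≫ S.γ M R R


/-- A monad `⟨O, ω, ι⟩` on `C`, given by explicit data. -/
structure MonadStr (C : Type u) [Category.{v} C] where
  obj : C → C
  map : ∀ {X Y : C}, (X ⟶ Y) → (obj X ⟶ obj Y)
  map_id : ∀ X : C, map (𝟙 X) = 𝟙 (obj X)
  map_comp : ∀ {X Y Z : C} (f : X ⟶ Y) (g : Y ⟶ Z), map (f ≫ g) = map f ≫ map g
  ω : ∀ X : C, obj (obj X) ⟶ obj X
  ι : ∀ X : C, X ⟶ obj X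
  ω_natural : ∀ {X Y : C} (f : X ⟶ Y), map (map f) ≫ ω Y = ω X ≫ map f
  ι_natural : ∀ {X Y : C} (f : X ⟶ Y), f ≫ ι Y = ι X ≫ map f
  ω_assoc : ∀ X : C, map (ω X) ≫ ω X = ω (obj X) ≫ ω X
  ω_unit_left : ∀ X : C, ι (obj X) ≫ ω X = 𝟙 (obj X)
  ω_unit_right : ∀ X : C, map (ι X) ≫ ω X = 𝟙 (obj X)

/-- The seven opmonoidality axioms (opmon1)–(opmon7), together with naturality,
making a monad `O` on the right-monoidal category `⟨𝓔, ⊗, R, α, ℓ⁻¹, r⟩` an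
opmonoidal monad (`⊗`-bimonad). -/
def IsOpmonoidal (S : RightMonoidalStruct C R) (O : MonadStr C)
    (O2 : ∀ M N : C, O.obj (S.smp M N) ⟶ S.smp (O.obj M) (O.obj N))
    (O0 : O.obj R ⟶ R) : Prop :=
  (∀ {M M' N N' : C} (f : M ⟶ M') (g : N ⟶ N'),
      O.map (S.smpHom f g) ≫ O2 M' N' = O2 M N ≫ S.smpHom (O.map f) (O.map g)) ∧
  (∀ L M N : C,
      O2 L (S.smp M N) ≫ S.smpHom (𝟙 (O.obj L)) (O2 M N)
          ≫ S.γ (O.obj L) (O.obj M) (O.obj N)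
        = O.map (S.γ L M N) ≫ O2 (S.smp L M) N ≫ S.smpHom (O2 L M) (𝟙 (O.obj N))) ∧
  (∀ N : C,
      O.map (S.η N) ≫ O2 R N ≫ S.smpHom O0 (𝟙 (O.obj N)) = S.η (O.obj N)) ∧
  (∀ M : C,
      O2 M R ≫ S.smpHom (𝟙 (O.obj M)) O0 ≫ S.ε (O.obj M) = O.map (S.ε M)) ∧
  (∀ M N : C,
      O.map (O2 M N) ≫ O2 (O.obj M) (O.obj N) ≫ S.smpHom (O.ω M) (O.ω N)
        = O.ω (S.smp M N) ≫ O2 M N) ∧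
  (O.ω R ≫ O0 = O.map O0 ≫ O0) ∧
  (∀ M N : C, O.ι (S.smp M N) ≫ O2 M N = S.smpHom (O.ι M) (O.ι N)) ∧
  (O.ι R ≫ O0 = 𝟙 R)

/-- The fusion-operator axioms (H0)–(H6), together with naturality, for a
natural transformation `h_{M,N} : O(M ⊗ ON) → OM ⊗ ON` and `O⁰ : OR → R`. -/
def IsFusion (S : RightMonoidalStruct C R) (O : MonadStr C)
    (h : ∀ M N : C, O.obj (S.smp M (O.obj N)) ⟶ S.smp (O.obj M) (O.obj N))
    (O0 : O.obj R ⟶ R) : Prop :=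
  (∀ {M M' N N' : C} (f : M ⟶ M') (g : N ⟶ N'),
      O.map (S.smpHom f (O.map g)) ≫ h M' N'
        = h M N ≫ S.smpHom (O.map f) (O.map g)) ∧
  (∀ M N : C,
      h M (O.obj N) ≫ S.smpHom (𝟙 (O.obj M)) (O.ω N)
        = O.map (S.smpHom (𝟙 M) (O.ω N)) ≫ h M N) ∧
  (∀ L M N : C,
      O.map (S.smpHom (𝟙 L) (h M N)) ≫ O.map (S.γ L (O.obj M) (O.obj N))
          ≫ h (S.smp L (O.obj M)) N ≫ S.smpHom (h L M) (𝟙 (O.obj N))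
        = h L (S.smp M (O.obj N)) ≫ S.smpHom (𝟙 (O.obj L)) (h M N)
            ≫ S.γ (O.obj L) (O.obj M) (O.obj N)) ∧
  (∀ M N : C,
      O.ι (S.smp M (O.obj N)) ≫ h M N = S.smpHom (O.ι M) (𝟙 (O.obj N))) ∧
  (∀ N : C,
      O.map (S.η (O.obj N)) ≫ h R N ≫ S.smpHom O0 (𝟙 (O.obj N))
        = O.ω N ≫ S.η (O.obj N)) ∧
  (∀ M : C,
      h M R ≫ S.smpHom (𝟙 (O.obj M)) O0 ≫ S.ε (O.obj M)
        = O.map (S.smpHom (𝟙 M) O0) ≫ O.map (S.ε M)) ∧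
  (∀ M N : C,
      O.map (h M N) ≫ h (O.obj M) N ≫ S.smpHom (O.ω M) (𝟙 (O.obj N))
        = O.ω (S.smp M (O.obj N)) ≫ h M N) ∧
  (O.ι R ≫ O0 = 𝟙 R)

section
variable (S : RightMonoidalStruct C R) (O : MonadStr C)
  (O2 : ∀ M N : C, O.obj (S.smp M N) ⟶ S.smp (O.obj M) (O.obj N))
  (O0 : O.obj R ⟶ R)

/-- The skew-monoidal product `M ⊙ N := M ⊗ ON` induced by a bimonad. -/
def odot (M N : C) : C := S.smp M (O.obj N)

/-- `⊙` on morphisms: `f ⊙ g := f ⊗ Og`. -/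
def odotHom {M M' N N' : C} (f : M ⟶ M') (g : N ⟶ N') :
    odot S O M N ⟶ odot S O M' N' := S.smpHom f (O.map g)

/-- The induced skew-associator
`γ̇_{L,M,N} := α_{L,OM,ON} ∘ (L ⊗ (OM ⊗ ω_N)) ∘ (L ⊗ O^{M,ON})`. -/
def gdot (L M N : C) : odot S O L (odot S O M N) ⟶ odot S O (odot S O L M) N :=
  S.smpHom (𝟙 L) (O2 M (O.obj N))
    ≫ S.smpHom (𝟙 L) (S.smpHom (𝟙 (O.obj M)) (O.ω N))
    ≫ S.γ L (O.obj M) (O.obj N)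

/-- The induced unit `η̇_M := ℓ⁻¹_{OM} ∘ ι_M`. -/
def etadot (M : C) : M ⟶ odot S O R M := O.ι M ≫ S.η (O.obj M)

/-- The induced counit `ε̇_M := r_M ∘ (M ⊗ O⁰)`. -/
def epsdot (M : C) : odot S O M R ⟶ M := S.smpHom (𝟙 M) O0 ≫ S.ε M

/-- The multiplication `μ̇_M := (ε̇_R ⊙ M) ∘ γ̇_{R,R,M}` of the canonical monad
`Ṫ = R ⊙ -` of the induced structure. -/
def mudot (M : C) : odot S O R (odot S O R M) ⟶ odot S O R M :=
  gdot S O O2 R R M ≫ odotHom S O (epsdot S O O0 R) (𝟙 M)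

end


section AuxLemmas

variable (S : RightMonoidalStruct C R) (O : MonadStr C)
  (O2 : ∀ M N : C, O.obj (S.smp M N) ⟶ S.smp (O.obj M) (O.obj N))
  (O0 : O.obj R ⟶ R)

lemma smp_comp {X X' X'' Y Y' Y'' : C} (f : X ⟶ X') (f' : X' ⟶ X'')
    (g : Y ⟶ Y') (g' : Y' ⟶ Y'') :
    S.smpHom f g ≫ S.smpHom f' g' = S.smpHom (f ≫ f') (g ≫ g') :=
  (S.smpHom_comp f f' g g').symm

lemma smp_comp_assoc {X X' X'' Y Y' Y'' Z : C} (f : X ⟶ X') (f' : X' ⟶ X'')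
    (g : Y ⟶ Y') (g' : Y' ⟶ Y'') (z : S.smp X'' Y'' ⟶ Z) :
    S.smpHom f g ≫ (S.smpHom f' g' ≫ z) = S.smpHom (f ≫ f') (g ≫ g') ≫ z := by
  rw [← Category.assoc, smp_comp]

lemma gamma_nat_right (L M : C) {N N' : C} (h : N ⟶ N') :
    S.γ L M N ≫ S.smpHom (𝟙 (S.smp L M)) h
      = S.smpHom (𝟙 L) (S.smpHom (𝟙 M) h) ≫ S.γ L M N' := by
  have := S.γ_natural (𝟙 L) (𝟙 M) h
  rw [S.smpHom_id] at this
  exact this.symm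

lemma gamma_nat_right_assoc (L M : C) {N N' Z : C} (h : N ⟶ N')
    (z : S.smp (S.smp L M) N' ⟶ Z) :
    S.γ L M N ≫ S.smpHom (𝟙 (S.smp L M)) h ≫ z
      = S.smpHom (𝟙 L) (S.smpHom (𝟙 M) h) ≫ S.γ L M N' ≫ z := by
  rw [← Category.assoc, gamma_nat_right, Category.assoc]

lemma fusH6 (hnat : ∀ {M M' N N' : C} (f : M ⟶ M') (g : N ⟶ N'),
      O.map (S.smpHom f g) ≫ O2 M' N' = O2 M N ≫ S.smpHom (O.map f) (O.map g))
    (h5 : ∀ M N : C,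
      O.map (O2 M N) ≫ O2 (O.obj M) (O.obj N) ≫ S.smpHom (O.ω M) (O.ω N)
        = O.ω (S.smp M N) ≫ O2 M N) (M N : C) :
    O.map (O2 M (O.obj N) ≫ S.smpHom (𝟙 (O.obj M)) (O.ω N))
        ≫ O2 (O.obj M) (O.obj N) ≫ S.smpHom (O.ω M) (O.ω N)
      = O.ω (S.smp M (O.obj N)) ≫ O2 M (O.obj N)
          ≫ S.smpHom (𝟙 (O.obj M)) (O.ω N) := by
  simp only [O.map_comp, Category.assoc]
  rw [reassoc_of% hnat (𝟙 (O.obj M)) (O.ω N)]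
  simp only [O.map_id, smp_comp_assoc, smp_comp, Category.assoc,
    Category.id_comp, Category.comp_id]
  rw [O.ω_assoc N,
    show S.smpHom (O.ω M) (O.ω (O.obj N) ≫ O.ω N)
        = S.smpHom (O.ω M) (O.ω (O.obj N)) ≫ S.smpHom (𝟙 (O.obj M)) (O.ω N) from by
      simp only [smp_comp, Category.comp_id],
    reassoc_of% h5 M (O.obj N)]

end AuxLemmas

/-- Proposition 7.2 of Szlachányi.  A `⊗`-bimonad
`⟨O, ω, ι, O², O⁰⟩` on a right-monoidal category `⟨𝓔, ⊗, R, α, ℓ⁻¹, r⟩` induces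
a right-monoidal structure `⟨𝓔, ⊙, R, γ̇, η̇, ε̇⟩` with `M ⊙ N := M ⊗ ON`,
and `ℓ⁻¹_{ON} : ON → R ⊗ ON = ṪN` is a monad morphism from `O` to the
canonical monad `Ṫ = R ⊙ -` of the `⊙`-structure. -/
theorem bimonad_induced_skew_monoidal (S : RightMonoidalStruct C R)
    (O : MonadStr C)
    (O2 : ∀ M N : C, O.obj (S.smp M N) ⟶ S.smp (O.obj M) (O.obj N))
    (O0 : O.obj R ⟶ R)
    (hop : IsOpmonoidal S O O2 O0) :
    -- functoriality of `⊙`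
    (∀ M N : C, odotHom S O (𝟙 M) (𝟙 N) = 𝟙 (odot S O M N)) ∧
    (∀ {X X' X'' Y Y' Y'' : C} (f : X ⟶ X') (f' : X' ⟶ X'')
        (g : Y ⟶ Y') (g' : Y' ⟶ Y''),
        odotHom S O (f ≫ f') (g ≫ g') = odotHom S O f g ≫ odotHom S O f' g') ∧
    -- naturality of `γ̇`, `η̇`, `ε̇`
    (∀ {L L' M M' N N' : C} (f : L ⟶ L') (g : M ⟶ M') (h : N ⟶ N'),
        odotHom S O f (odotHom S O g h) ≫ gdot S O O2 L' M' N'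
          = gdot S O O2 L M N ≫ odotHom S O (odotHom S O f g) h) ∧
    (∀ {M M' : C} (f : M ⟶ M'),
        f ≫ etadot S O M' = etadot S O M ≫ odotHom S O (𝟙 R) f) ∧
    (∀ {M M' : C} (f : M ⟶ M'),
        odotHom S O f (𝟙 R) ≫ epsdot S O O0 M' = epsdot S O O0 M ≫ f) ∧
    -- the five skew-monoidal axioms for `⊙`
    (∀ K L M N : C,
        odotHom S O (𝟙 K) (gdot S O O2 L M N)
            ≫ gdot S O O2 K (odot S O L M) N
            ≫ odotHom S O (gdot S O O2 K L M) (𝟙 N)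
          = gdot S O O2 K L (odot S O M N) ≫ gdot S O O2 (odot S O K L) M N) ∧
    (∀ M N : C,
        etadot S O (odot S O M N) ≫ gdot S O O2 R M N
          = odotHom S O (etadot S O M) (𝟙 N)) ∧
    (∀ M N : C,
        gdot S O O2 M N R ≫ epsdot S O O0 (odot S O M N)
          = odotHom S O (𝟙 M) (epsdot S O O0 N)) ∧
    (∀ M N : C,
        odotHom S O (𝟙 M) (etadot S O N) ≫ gdot S O O2 M R N
            ≫ odotHom S O (epsdot S O O0 M) (𝟙 N)
          = 𝟙 (odot S O M N)) ∧
    (etadot S O R ≫ epsdot S O O0 R = 𝟙 R) ∧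
    -- `ℓ⁻¹_{ON}` is a monad morphism from `O` to `Ṫ`
    (∀ N : C,
        O.map (S.η (O.obj N)) ≫ S.η (O.obj (S.smp R (O.obj N)))
            ≫ mudot S O O2 O0 N
          = O.ω N ≫ S.η (O.obj N)) ∧
    (∀ N : C, etadot S O N = O.ι N ≫ S.η (O.obj N)) := by
  obtain ⟨hnat, h2, h3, h4, h5, h6, h7, h8⟩ := hop
  have hnat_l : ∀ (X : C) {Y Y' : C} (g : Y ⟶ Y'),
      O.map (S.smpHom (𝟙 X) g) ≫ O2 X Y'
        = O2 X Y ≫ S.smpHom (𝟙 (O.obj X)) (O.map g) := by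
    intro X Y Y' g; rw [hnat (𝟙 X) g, O.map_id]
  refine ⟨?_, ?_, ?_, ?_, ?_, ?_, ?_, ?_, ?_, ?_, ?_, ?_⟩
  · intro M N
    simp only [odotHom, odot, O.map_id, S.smpHom_id]
  · intro X X' X'' Y Y' Y'' f f' g g'
    simp only [odotHom, odot, O.map_comp, S.smpHom_comp]
  · intro L L' M M' N N' f g h
    simp only [odotHom, gdot, odot, Category.assoc]
    rw [← S.γ_natural f (O.map g) (O.map h)]
    simp only [smp_comp_assoc, smp_comp, Category.assoc, Category.id_comp,
      Category.comp_id]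
    rw [reassoc_of% hnat g (O.map h)]
    simp only [smp_comp_assoc, smp_comp, Category.assoc, Category.id_comp,
      Category.comp_id]
    rw [O.ω_natural h]
  · intro M M' f
    simp only [etadot, odotHom, odot]
    rw [← Category.assoc, O.ι_natural f, Category.assoc, S.η_natural (O.map f)]
    simp only [Category.assoc]
  · intro M M' f
    simp only [odotHom, epsdot, odot, O.map_id, smp_comp_assoc S, Category.id_comp,
      Category.comp_id]
    rw [show S.smpHom f O0 = S.smpHom (𝟙 M) O0 ≫ S.smpHom f (𝟙 R) by
        simp only [smp_comp, Category.id_comp, Category.comp_id],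
      Category.assoc, S.ε_natural f]
    simp only [Category.assoc]
  · intro K L M N
    simp only [gdot, odotHom, odot, O.map_id, Category.assoc]
    rw [gamma_nat_right_assoc, gamma_nat_right_assoc, ← S.pentagon]
    rw [show S.smpHom (S.smpHom (𝟙 K) (O2 L (O.obj M))
            ≫ S.smpHom (𝟙 K) (S.smpHom (𝟙 (O.obj L)) (O.ω M))
            ≫ S.γ K (O.obj L) (O.obj M)) (𝟙 (O.obj N))
        = S.smpHom (S.smpHom (𝟙 K) (O2 L (O.obj M))) (𝟙 (O.obj N))
            ≫ S.smpHom (S.smpHom (𝟙 K) (S.smpHom (𝟙 (O.obj L)) (O.ω M))) (𝟙 (O.obj N))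
            ≫ S.smpHom (S.γ K (O.obj L) (O.obj M)) (𝟙 (O.obj N)) from by
      simp only [smp_comp, Category.assoc, Category.comp_id, Category.id_comp],
      ← reassoc_of% S.γ_natural (𝟙 K) (O2 L (O.obj M)) (𝟙 (O.obj N)),
      ← reassoc_of% S.γ_natural (𝟙 K) (S.smpHom (𝟙 (O.obj L)) (O.ω M)) (𝟙 (O.obj N))]
    simp only [O.map_comp, smp_comp_assoc, smp_comp, Category.assoc,
      Category.id_comp, Category.comp_id]
    rw [show S.smpHom (O2 L (O.obj M) ≫ S.smpHom (𝟙 (O.obj L)) (O.ω M)) (O.ω N)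
        = S.smpHom (O2 L (O.obj M)) (𝟙 (O.obj (O.obj N)))
            ≫ S.smpHom (S.smpHom (𝟙 (O.obj L)) (O.ω M)) (𝟙 (O.obj (O.obj N)))
            ≫ S.smpHom (𝟙 (S.smp (O.obj L) (O.obj M))) (O.ω N) from by
      simp only [smp_comp, Category.assoc, Category.comp_id, Category.id_comp],
      ← reassoc_of% h2 L (O.obj M) (O.obj N),
      ← reassoc_of% S.γ_natural (𝟙 (O.obj L)) (O.ω M) (𝟙 (O.obj (O.obj N))),
      gamma_nat_right,
      reassoc_of% hnat (𝟙 L) (O2 M (O.obj N) ≫ S.smpHom (𝟙 (O.obj M)) (O.ω N))]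
    simp only [O.map_id, smp_comp_assoc, smp_comp, Category.assoc,
      Category.id_comp, Category.comp_id]
    rw [fusH6 S O O2 hnat h5 M N]
  · intro M N
    simp only [etadot, gdot, odot, odotHom, Category.assoc, smp_comp_assoc,
      smp_comp, Category.id_comp, Category.comp_id]
    rw [← reassoc_of% S.η_natural
        (O2 M (O.obj N) ≫ S.smpHom (𝟙 (O.obj M)) (O.ω N)),
      S.unit_triangle, reassoc_of% h7 M (O.obj N)]
    simp only [smp_comp_assoc, smp_comp, Category.assoc, Category.id_comp,
      Category.comp_id, O.map_id, O.ω_unit_left]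
  · intro M N
    simp only [gdot, epsdot, odot, odotHom, Category.assoc]
    rw [show 𝟙 (S.smp M (O.obj N)) = S.smpHom (𝟙 M) (𝟙 (O.obj N)) from
        (S.smpHom_id _ _).symm,
      ← reassoc_of% S.γ_natural (𝟙 M) (𝟙 (O.obj N)) O0,
      S.counit_triangle M (O.obj N)]
    simp only [smp_comp_assoc, smp_comp, Category.assoc, Category.id_comp,
      Category.comp_id]
    congr 1
    rw [h6,
      show S.smpHom (𝟙 (O.obj N)) (O.map O0 ≫ O0) = S.smpHom (𝟙 (O.obj N)) (O.map O0)
        ≫ S.smpHom (𝟙 (O.obj N)) O0 from by simp only [smp_comp, Category.id_comp],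
      Category.assoc, ← reassoc_of% hnat_l N O0, h4 N, ← O.map_comp]
  · intro M N
    simp only [etadot, gdot, odot, odotHom, epsdot, Category.assoc, O.map_id,
      O.map_comp]
    rw [show S.smpHom (S.smpHom (𝟙 M) O0 ≫ S.ε M) (𝟙 (O.obj N))
          = S.smpHom (S.smpHom (𝟙 M) O0) (𝟙 (O.obj N))
            ≫ S.smpHom (S.ε M) (𝟙 (O.obj N)) from by
        simp only [smp_comp, Category.comp_id],
      ← reassoc_of% S.γ_natural (𝟙 M) O0 (𝟙 (O.obj N))]
    simp only [smp_comp_assoc, smp_comp, Category.assoc, Category.id_comp,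
      Category.comp_id]
    rw [show S.smpHom O0 (O.ω N)
          = S.smpHom O0 (𝟙 (O.obj (O.obj N))) ≫ S.smpHom (𝟙 R) (O.ω N) from by
        simp only [smp_comp, Category.id_comp, Category.comp_id],
      reassoc_of% h3 (O.obj N),
      ← S.η_natural (O.ω N), reassoc_of% O.ω_unit_right N,
      S.mixed_triangle M (O.obj N)]
  · simp only [etadot, epsdot, odot, Category.assoc]
    rw [← reassoc_of% S.η_natural O0, S.unit_counit, Category.comp_id, h8]
  · intro N
    simp only [mudot, gdot, odotHom, epsdot, odot, Category.assoc, O.map_id]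
    rw [show S.smpHom (S.smpHom (𝟙 R) O0 ≫ S.ε R) (𝟙 (O.obj N))
          = S.smpHom (S.smpHom (𝟙 R) O0) (𝟙 (O.obj N))
            ≫ S.smpHom (S.ε R) (𝟙 (O.obj N)) from by
        simp only [smp_comp, Category.comp_id]]
    simp only [smp_comp_assoc, smp_comp, Category.assoc, Category.id_comp,
      Category.comp_id]
    rw [← reassoc_of% S.η_natural
        (O2 R (O.obj N) ≫ S.smpHom (𝟙 (O.obj R)) (O.ω N)),
      reassoc_of% S.unit_triangle (O.obj R) (O.obj N)]
    simp only [smp_comp_assoc, smp_comp, Category.assoc, Category.id_comp,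
      Category.comp_id]
    rw [show S.η (O.obj R) ≫ S.smpHom (𝟙 R) O0 ≫ S.ε R = O0 from by
        rw [← Category.assoc, ← S.η_natural O0, Category.assoc, S.unit_counit,
          Category.comp_id],
      show S.smpHom O0 (O.ω N)
          = S.smpHom O0 (𝟙 (O.obj (O.obj N))) ≫ S.smpHom (𝟙 R) (O.ω N) from by
        simp only [smp_comp, Category.id_comp, Category.comp_id],
      reassoc_of% h3 (O.obj N), ← S.η_natural (O.ω N)]
  · intro N
    rfl
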